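/- Let 𝔇 be a nonempty symmetric set of tournaments on X and suppose maj-cl(𝔇) contains every tournament on X. Then for every pair of distinct x, y ∈ X there exists a weighted tournament t ∈ pr-cl(𝔇) such that t(x,y) > 1/2 and t(u,v) = 1/2 for all distinct u, v ∈ X with {u,v} ≠ {x,y}. -/

import Mathlib

open scoped BigOperators

variable {X : Type*}

/-- A tournament on `X`: irreflexive and, on distinct points, exactly one direction holds. -/
def IsTournament (R : X → X → Prop) : Prop :=
  (∀ x, ¬ R x x) ∧ ∀ x y : X, x ≠ y → (R x y ↔ ¬ R y x)

/-- Out-degree of `x` in the relation `R`. -/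
noncomputable def valT (R : X → X → Prop) (x : X) : ℕ :=
  Set.ncard {y | R x y}

/-- A tournament is balanced if every out-degree equals `(n-1)/2`. -/
def IsBalanced [Fintype X] (R : X → X → Prop) : Prop :=
  ∀ x : X, (valT R x : ℝ) = ((Fintype.card X : ℝ) - 1) / 2

/-- Action of a permutation on a relation. -/
def permAct (π : Equiv.Perm X) (R : X → X → Prop) : X → X → Prop :=
  fun x y => R (π.symm x) (π.symm y)

/-- A set of relations closed under the permutation action. -/
def SymmetricSet (D : Set (X → X → Prop)) : Prop :=
  ∀ (π : Equiv.Perm X), ∀ R ∈ D, permAct π R ∈ D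

/-- The majority closure of a set of tournaments. -/
def majCl [Fintype X] (D : Set (X → X → Prop)) : Set (X → X → Prop) :=
  {d | IsTournament d ∧ ∃ w : (X → X → Prop) → ℝ,
    (∀ c, 0 ≤ w c ∧ w c ≤ 1) ∧
    (∀ c, w c ≠ 0 → c ∈ D) ∧
    (Function.support w).Finite ∧
    (∑ᶠ c, w c) = 1 ∧
    ∀ x y : X, x ≠ y →
      (d x y ↔ 1 / 2 < ∑ᶠ c ∈ {c : X → X → Prop | c ∈ D ∧ c x y}, w c)}

open Classical in
noncomputable def tOf (d : X → X → Prop) : X → X → ℝ :=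
  fun x y => if d x y then 1 else 0

/-- pr-cl: the convex hull of `{t[d] : d ∈ D}`. -/
noncomputable def prCl (D : Set (X → X → Prop)) : Set (X → X → ℝ) :=
  convexHull ℝ (tOf '' D)

/-- `t` is a weighted tournament. -/
def IsWeighted (t : X → X → ℝ) : Prop :=
  ∀ x y : X, x ≠ y → 0 ≤ t x y ∧ t x y ≤ 1 ∧ t y x = 1 - t x y

/-- A weighted tournament is balanced if each row sums to `(n-1)/2`. -/
def BalancedW [Fintype X] (t : X → X → ℝ) : Prop :=
  ∀ x : X, (∑ᶠ y ∈ {y : X | y ≠ x}, t x y) = ((Fintype.card X : ℝ) - 1) / 2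

/-- A tournament is pseudo-balanced if it is dominated by a balanced weighted tournament. -/
def PseudoBalanced [Fintype X] (c : X → X → Prop) : Prop :=
  ∃ t : X → X → ℝ, IsWeighted t ∧ BalancedW t ∧
    ∀ x y : X, x ≠ y → c x y → 1 / 2 < t x y

open Classical in
noncomputable def tConfig (x y : X) (a s0 s1 : ℝ) : X → X → ℝ :=
  fun u v =>
    if u = v then 0
    else if u = x ∧ v = y then a
    else if u = y ∧ v = x then 1 - a
    else if u = x then s0
    else if v = x then 1 - s0
    else if u = y then s1
    else if v = y then 1 - s1
    else 1 / 2

/-- `Prd_ℓ(𝒟)`. -/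
noncomputable def PrdL [Fintype X] (l : ℕ) (D : Set (X → X → Prop)) : Set (ℝ × ℝ) :=
  {p | ∃ c ∈ D, ∃ x y : X, x ≠ y ∧ (c x y ↔ l = 1) ∧
    p.1 = (Set.ncard {z : X | z ≠ x ∧ z ≠ y ∧ c x z} : ℝ) / ((Fintype.card X : ℝ) - 2) ∧
    p.2 = (Set.ncard {z : X | z ≠ x ∧ z ≠ y ∧ c y z} : ℝ) / ((Fintype.card X : ℝ) - 2)}

/-- `Pr_A(𝒟)`. -/
noncomputable def PrA [Fintype X] (A : Set ℝ) (D : Set (X → X → Prop)) : Set (ℝ × ℝ) :=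
  {p | 0 ≤ p.1 ∧ p.1 ≤ 1 ∧ 0 ≤ p.2 ∧ p.2 ≤ 1 ∧
    ∃ x y : X, x ≠ y ∧ ∃ a ∈ A, tConfig x y a p.1 p.2 ∈ prCl D}

/-- `V_ℓ(d)` as a subset of `ℝ²`. -/
noncomputable def Vset [Fintype X] (l : ℕ) (d : X → X → Prop) : Set (ℝ × ℝ) :=
  {p | ∃ x y : X, x ≠ y ∧ (if l = 1 then d x y else d y x) ∧
    p = ((valT d x : ℝ), (valT d y : ℝ))}

/-- `V*_ℓ(d)`. -/
noncomputable def VstarSet [Fintype X] (l : ℕ) (d : X → X → Prop) : Set (ℝ × ℝ) :=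
  {p | ∃ q ∈ Vset l d, p = (q.1 - (l : ℝ), q.2 - (1 - (l : ℝ)))}

open Classical in
noncomputable def tCycle (k : ℕ) (xs : ℕ → X) (a : ℝ) : X → X → ℝ :=
  fun u v =>
    if u = v then 0
    else if ∃ i < k, u = xs i ∧ v = xs ((i + 1) % k) then a
    else if ∃ i < k, v = xs i ∧ u = xs ((i + 1) % k) then 1 - a
    else 1 / 2

open Classical in
noncomputable def tTriple (x y z : X) : X → X → ℝ :=
  fun u v =>
    if u = v then 0
    else if (u, v) = (x, y) ∨ (u, v) = (y, z) ∨ (u, v) = (z, x) then 1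
    else if (u, v) = (y, x) ∨ (u, v) = (z, y) ∨ (u, v) = (x, z) then 0
    else 1 / 2

/-- The dual (reverse) tournament. -/
def dualT (c : X → X → Prop) : X → X → Prop := fun x y => c y x

/-- The symmetric closure (orbit) of a single tournament. -/
def symCl (c : X → X → Prop) : Set (X → X → Prop) :=
  {d | ∃ π : Equiv.Perm X, d = permAct π c}

-- ### auxiliary lemmas

lemma isTournament_of_inj {ρ : X → ℕ} (hρ : Function.Injective ρ) :
    IsTournament (fun u v => ρ u < ρ v) := by
  refine ⟨fun x => lt_irrefl _, fun u v huv => ?_⟩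
  have h : ρ u ≠ ρ v := fun h => huv (hρ h)
  omega

lemma isTournament_dual {d : X → X → Prop} (hd : IsTournament d) : IsTournament (dualT d) :=
  ⟨hd.1, fun u v huv => hd.2 v u huv.symm⟩

open Classical in
lemma isTournament_flip (x y : X) (hxy : x ≠ y) {d : X → X → Prop} (hd : IsTournament d) :
    IsTournament (fun u v => if (u = x ∧ v = y) ∨ (u = y ∧ v = x) then u = x else d u v) := by
  classical
  constructor
  · intro u
    by_cases h : (u = x ∧ u = y) ∨ (u = y ∧ u = x)
    · exfalso
      rcases h with ⟨h1, h2⟩ | ⟨h1, h2⟩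
      · exact hxy (h1.symm.trans h2)
      · exact hxy (h2.symm.trans h1)
    · show ¬ (if (u = x ∧ u = y) ∨ (u = y ∧ u = x) then u = x else d u u)
      rw [if_neg h]
      exact hd.1 u
  · intro u v huv
    show (if (u = x ∧ v = y) ∨ (u = y ∧ v = x) then u = x else d u v) ↔
      ¬ (if (v = x ∧ u = y) ∨ (v = y ∧ u = x) then v = x else d v u)
    by_cases h : (u = x ∧ v = y) ∨ (u = y ∧ v = x)
    · have h' : (v = x ∧ u = y) ∨ (v = y ∧ u = x) := by tauto
      rw [if_pos h, if_pos h']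
      rcases h with ⟨h1, h2⟩ | ⟨h1, h2⟩
      · subst h1; subst h2
        simp [hxy.symm]
      · subst h1; subst h2
        simp [hxy.symm]
    · have h' : ¬ ((v = x ∧ u = y) ∨ (v = y ∧ u = x)) := by tauto
      rw [if_neg h, if_neg h']
      exact hd.2 u v huv

open Classical in
lemma inj_ite {n : ℕ} (e : X ≃ Fin n) (x y : X) (hxy : x ≠ y) (a b : ℕ) (g : Fin n → ℕ)
    (hg : Function.Injective g) (ha : ∀ i, a ≠ g i) (hb : ∀ i, b ≠ g i) (hab : a ≠ b) :
    Function.Injective (fun u => if u = x then a else if u = y then b else g (e u)) := by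
  intro u v h
  simp only [] at h
  split_ifs at h
  all_goals
    first
    | (subst_vars; rfl)
    | (exact absurd h hab)
    | (exact absurd h (ha _))
    | (exact absurd h (hb _))
    | (exact absurd h.symm hab)
    | (exact absurd h.symm (ha _))
    | (exact absurd h.symm (hb _))
    | (exact e.injective (hg h))

lemma mem_prCl_antisymm {D : Set (X → X → Prop)} (hT : ∀ c ∈ D, IsTournament c) :
    ∀ t ∈ prCl D, ∀ u v : X, u ≠ v → t u v + t v u = 1 := by
  intro t ht
  have hsub : prCl D ⊆ {t : X → X → ℝ | ∀ u v : X, u ≠ v → t u v + t v u = 1} := by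
    apply convexHull_min
    · rintro _ ⟨c, hc, rfl⟩ u v huv
      have h := hT c hc
      by_cases h1 : c u v
      · have h2 : ¬ c v u := (h.2 u v huv).1 h1
        simp [tOf, h1, h2]
      · have h2 : c v u := by
          by_contra h2
          exact h1 ((h.2 u v huv).2 h2)
        simp [tOf, h1, h2]
    · intro p hp q hq a b ha hb hab
      intro u v huv
      have h1 := hp u v huv
      have h2 := hq u v huv
      simp only [Pi.add_apply, Pi.smul_apply, smul_eq_mul]
      linear_combination a * h1 + b * h2 + hab
  exact hsub ht

lemma majCl_witness [Fintype X] {D : Set (X → X → Prop)} {d : X → X → Prop}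
    (hd : d ∈ majCl D) :
    ∃ t ∈ prCl D, ∀ u v : X, u ≠ v → (d u v ↔ 1 / 2 < t u v) := by
  classical
  obtain ⟨hdT, w, hw01, hwD, hfin, hsum, hmaj⟩ := hd
  set s : Finset (X → X → Prop) := hfin.toFinset with hs
  have hmem : ∀ c, c ∈ s ↔ w c ≠ 0 := fun c => hfin.mem_toFinset
  have hsupp : Function.support w ⊆ ↑s := fun c hc => (hmem c).2 hc
  have hsum' : ∑ c ∈ s, w c = 1 := by
    rw [← finsum_eq_sum_of_support_subset w hsupp]; exact hsum
  set t : X → X → ℝ := ∑ c ∈ s, w c • tOf c with htdef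
  have htmem : t ∈ prCl D := by
    have h1 : s.centerMass w (fun c => tOf c) ∈ convexHull ℝ (tOf '' D) :=
      Finset.centerMass_mem_convexHull s (fun c _ => (hw01 c).1) (by rw [hsum']; norm_num)
        (fun c hc => ⟨c, hwD c ((hmem c).1 hc), rfl⟩)
    rwa [Finset.centerMass_eq_of_sum_1 _ _ hsum'] at h1
  refine ⟨t, htmem, fun u v huv => ?_⟩
  have hval : (∑ᶠ c ∈ {c : X → X → Prop | c ∈ D ∧ c u v}, w c) = t u v := by
    rw [finsum_mem_def]
    have hsub2 : Function.support (Set.indicator {c : X → X → Prop | c ∈ D ∧ c u v} w) ⊆ ↑s := by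
      intro c hc
      apply hsupp
      simp only [Function.mem_support] at hc ⊢
      intro h0
      apply hc
      rw [Set.indicator_apply]
      split <;> simp [h0]
    rw [finsum_eq_sum_of_support_subset _ hsub2, htdef]
    simp only [Finset.sum_apply, Pi.smul_apply, smul_eq_mul]
    apply Finset.sum_congr rfl
    intro c hc
    have hcD : c ∈ D := hwD c ((hmem c).1 hc)
    by_cases hcuv : c u v
    · rw [Set.indicator_of_mem (by exact ⟨hcD, hcuv⟩)]
      simp [tOf, hcuv]
    · rw [Set.indicator_of_notMem (by simp [hcuv])]
      simp [tOf, hcuv]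
  rw [← hval]
  exact hmaj u v huv

lemma prCl_perm {D : Set (X → X → Prop)} (hsym : SymmetricSet D) (π : Equiv.Perm X)
    {t : X → X → ℝ} (ht : t ∈ prCl D) :
    (fun u v => t (π.symm u) (π.symm v)) ∈ prCl D := by
  have hlin : IsLinearMap ℝ (fun (t : X → X → ℝ) => fun u v => t (π.symm u) (π.symm v)) :=
    ⟨fun a b => rfl, fun c a => rfl⟩
  have hsub : prCl D ⊆ (fun (t : X → X → ℝ) => fun u v => t (π.symm u) (π.symm v)) ⁻¹' (prCl D) := by
    apply convexHull_min
    · rintro _ ⟨c, hc, rfl⟩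
      simp only [Set.mem_preimage]
      have heq : (fun u v => tOf c (π.symm u) (π.symm v)) = tOf (permAct π c) := rfl
      rw [heq]
      exact subset_convexHull ℝ _ ⟨permAct π c, hsym π c hc, rfl⟩
    · exact (convex_convexHull ℝ _).is_linear_preimage hlin
  exact hsub ht

open Classical in
noncomputable def stab [Fintype X] (x y : X) : Finset (Equiv.Perm X) :=
  Finset.univ.filter fun π => π x = x ∧ π y = y

lemma mem_stab [Fintype X] {x y : X} {π : Equiv.Perm X} :
    π ∈ stab x y ↔ π x = x ∧ π y = y := by
  classical
  simp [stab]

lemma one_mem_stab [Fintype X] (x y : X) : (1 : Equiv.Perm X) ∈ stab x y :=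
  mem_stab.2 ⟨rfl, rfl⟩

noncomputable def avgT [Fintype X] (x y : X) (t : X → X → ℝ) : X → X → ℝ :=
  fun u v => (∑ π ∈ stab x y, t (π.symm u) (π.symm v)) / (stab x y).card

lemma avgT_mem [Fintype X] {D : Set (X → X → Prop)} (hsym : SymmetricSet D) (x y : X)
    {t : X → X → ℝ} (ht : t ∈ prCl D) : avgT x y t ∈ prCl D := by
  classical
  have hpos : 0 < (stab (X := X) x y).card := Finset.card_pos.2 ⟨1, one_mem_stab x y⟩
  have h1 : (stab (X := X) x y).centerMass (fun _ => (1 : ℝ))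
      (fun π => fun u v => t (π.symm u) (π.symm v)) ∈ prCl D := by
    apply (convex_convexHull ℝ _).centerMass_mem (fun _ _ => zero_le_one)
    · simp only [Finset.sum_const, nsmul_eq_mul, mul_one]
      exact_mod_cast hpos
    · exact fun π _ => prCl_perm hsym π ht
  have h2 : avgT x y t = (stab (X := X) x y).centerMass (fun _ => (1 : ℝ))
      (fun π => fun u v => t (π.symm u) (π.symm v)) := by
    funext u v
    simp only [avgT, Finset.centerMass, Finset.sum_const, nsmul_eq_mul, mul_one, one_smul,
      Pi.smul_apply, Finset.sum_apply, smul_eq_mul]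
    rw [div_eq_inv_mul]
  rw [h2]; exact h1

lemma avgT_inv [Fintype X] (x y : X) (σ : Equiv.Perm X) (hσx : σ x = x) (hσy : σ y = y)
    (t : X → X → ℝ) (u v : X) :
    avgT x y t (σ u) (σ v) = avgT x y t u v := by
  classical
  unfold avgT
  congr 1
  refine Finset.sum_equiv (Equiv.mulLeft σ⁻¹) ?_ ?_
  · intro π
    simp only [mem_stab, Equiv.coe_mulLeft, Equiv.Perm.mul_apply]
    constructor
    · rintro ⟨h1, h2⟩
      rw [h1, h2]
      constructor
      · exact Equiv.Perm.inv_eq_iff_eq.2 hσx.symm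
      · exact Equiv.Perm.inv_eq_iff_eq.2 hσy.symm
    · rintro ⟨h1, h2⟩
      constructor
      · have := congrArg σ h1
        rw [Equiv.Perm.inv_def, Equiv.apply_symm_apply, hσx] at this
        exact this
      · have := congrArg σ h2
        rw [Equiv.Perm.inv_def, Equiv.apply_symm_apply, hσy] at this
        exact this
  · intro π _
    have key : ∀ w : X, π.symm (σ w) = ((Equiv.mulLeft σ⁻¹) π).symm w := by
      intro w
      simp only [Equiv.coe_mulLeft]
      have : (σ⁻¹ * π).symm = π.symm * σ := by
        rw [← Equiv.Perm.inv_def, ← Equiv.Perm.inv_def, mul_inv_rev, inv_inv]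
      rw [this, Equiv.Perm.mul_apply, ← Equiv.Perm.inv_def]
    rw [key u, key v]

lemma avgT_gt [Fintype X] {x y : X} {t : X → X → ℝ} {u v : X}
    (h : ∀ π ∈ stab (X := X) x y, 1 / 2 < t (π.symm u) (π.symm v)) :
    1 / 2 < avgT x y t u v := by
  classical
  have hne : (stab (X := X) x y).Nonempty := ⟨1, one_mem_stab x y⟩
  have hpos : (0 : ℝ) < (stab (X := X) x y).card := by
    exact_mod_cast Finset.card_pos.2 hne
  have h1 : ∑ π ∈ stab (X := X) x y, (1 / 2 : ℝ) < ∑ π ∈ stab x y, t (π.symm u) (π.symm v) :=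
    Finset.sum_lt_sum_of_nonempty hne h
  rw [Finset.sum_const, nsmul_eq_mul] at h1
  rw [avgT, lt_div_iff₀ hpos]
  linarith

lemma avgT_lt [Fintype X] {x y : X} {t : X → X → ℝ} {u v : X}
    (h : ∀ π ∈ stab (X := X) x y, t (π.symm u) (π.symm v) < 1 / 2) :
    avgT x y t u v < 1 / 2 := by
  classical
  have hne : (stab (X := X) x y).Nonempty := ⟨1, one_mem_stab x y⟩
  have hpos : (0 : ℝ) < (stab (X := X) x y).card := by
    exact_mod_cast Finset.card_pos.2 hne
  have h1 : ∑ π ∈ stab (X := X) x y, t (π.symm u) (π.symm v) < ∑ π ∈ stab x y, (1 / 2 : ℝ) :=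
    Finset.sum_lt_sum_of_nonempty hne h
  rw [Finset.sum_const, nsmul_eq_mul] at h1
  rw [avgT, div_lt_iff₀ hpos]
  linarith

lemma comb4_mem {s : Set (X → X → ℝ)} (hs : Convex ℝ s)
    {A₁ A₂ A₃ A₄ : X → X → ℝ} (h1 : A₁ ∈ s) (h2 : A₂ ∈ s) (h3 : A₃ ∈ s) (h4 : A₄ ∈ s)
    {μ₁ μ₂ μ₃ μ₄ : ℝ} (hμ1 : 0 < μ₁) (hμ2 : 0 < μ₂) (hμ3 : 0 < μ₃) (hμ4 : 0 < μ₄) :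
    (fun u v => (μ₁ * A₁ u v + μ₂ * A₂ u v + μ₃ * A₃ u v + μ₄ * A₄ u v) /
      (μ₁ + μ₂ + μ₃ + μ₄)) ∈ s := by
  classical
  set w : Fin 4 → ℝ := ![μ₁, μ₂, μ₃, μ₄] with hw
  set z : Fin 4 → (X → X → ℝ) := ![A₁, A₂, A₃, A₄] with hz
  have hw0 : ∀ i ∈ (Finset.univ : Finset (Fin 4)), 0 ≤ w i := by
    intro i _
    fin_cases i <;> simp [hw] <;> linarith
  have hwsum : 0 < ∑ i ∈ (Finset.univ : Finset (Fin 4)), w i := by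
    simp [hw, Fin.sum_univ_four]
    linarith
  have hzs : ∀ i ∈ (Finset.univ : Finset (Fin 4)), z i ∈ s := by
    intro i _
    fin_cases i <;> simpa [hz]
  have hmem := hs.centerMass_mem hw0 hwsum hzs
  have heq : (Finset.univ : Finset (Fin 4)).centerMass w z =
      fun u v => (μ₁ * A₁ u v + μ₂ * A₂ u v + μ₃ * A₃ u v + μ₄ * A₄ u v) /
        (μ₁ + μ₂ + μ₃ + μ₄) := by
    funext u v
    simp only [Finset.centerMass, Fin.sum_univ_four, hw, hz, Matrix.cons_val_zero,
      Matrix.cons_val_one, Matrix.head_cons, Matrix.cons_val_two, Matrix.tail_cons,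
      Matrix.cons_val_three, Matrix.head_fin_const, Pi.smul_apply, Pi.add_apply, smul_eq_mul]
    rw [div_eq_inv_mul]
  rwa [heq] at hmem

set_option maxHeartbeats 1600000 in
theorem stmt4 [Fintype X] (hcard : 3 ≤ Fintype.card X)
    (D : Set (X → X → Prop)) (hne : D.Nonempty) (hT : ∀ c ∈ D, IsTournament c)
    (hsym : SymmetricSet D)
    (hall : ∀ c : X → X → Prop, IsTournament c → c ∈ majCl D) :
    ∀ x y : X, x ≠ y →
      ∃ t ∈ prCl D, 1 / 2 < t x y ∧
        ∀ u v : X, u ≠ v → ({u, v} : Set X) ≠ ({x, y} : Set X) → t u v = 1 / 2 := by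
  classical
  intro x y hxy
  have hyx : y ≠ x := hxy.symm
  obtain ⟨z₀, hz₀x, hz₀y⟩ : ∃ z : X, z ≠ x ∧ z ≠ y := by
    by_contra hcon
    push_neg at hcon
    have hsub : (Finset.univ : Finset X) ⊆ {x, y} := by
      intro z _
      rcases eq_or_ne z x with h | h
      · simp [h]
      · simp [hcon z h]
    have hle := Finset.card_le_card hsub
    have h2 : ({x, y} : Finset X).card ≤ 2 := by
      apply le_trans (Finset.card_insert_le x {y})
      simp
    rw [Finset.card_univ] at hle
    omega
  set n := Fintype.card X with hn
  set e : X ≃ Fin n := Fintype.equivFin X with he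
  set ρ₁ : X → ℕ := fun u => if u = x then 0 else if u = y then 1 else (e u : ℕ) + 2 with hρ₁
  set ρ₂ : X → ℕ := fun u => if u = x then n else if u = y then n + 1 else (e u : ℕ) with hρ₂
  set ρ₃ : X → ℕ := fun u => if u = x then 0 else if u = y then n + 1 else (e u : ℕ) + 1 with hρ₃
  have hinj₁ : Function.Injective ρ₁ :=
    inj_ite e x y hxy 0 1 (fun i => (i : ℕ) + 2)
      (fun i j h => Fin.val_injective (by simp only [] at h; omega))
      (fun i => by omega) (fun i => by omega) (by omega)
  have hinj₂ : Function.Injective ρ₂ :=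
    inj_ite e x y hxy n (n + 1) (fun i => (i : ℕ))
      (fun i j h => Fin.val_injective h)
      (fun i => by have := i.isLt; omega)
      (fun i => by have := i.isLt; omega) (by omega)
  have hinj₃ : Function.Injective ρ₃ :=
    inj_ite e x y hxy 0 (n + 1) (fun i => (i : ℕ) + 1)
      (fun i j h => Fin.val_injective (by simp only [] at h; omega))
      (fun i => by omega)
      (fun i => by have := i.isLt; omega) (by omega)
  set d₁ : X → X → Prop := fun u v => ρ₁ u < ρ₁ v with hd₁def
  set d₂ : X → X → Prop := fun u v => ρ₂ u < ρ₂ v with hd₂def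
  set d₃ : X → X → Prop := fun u v => ρ₃ u < ρ₃ v with hd₃def
  set d₄ : X → X → Prop :=
    fun u v => if (u = x ∧ v = y) ∨ (u = y ∧ v = x) then u = x else dualT d₃ u v with hd₄def
  have hd₁ : IsTournament d₁ := isTournament_of_inj hinj₁
  have hd₂ : IsTournament d₂ := isTournament_of_inj hinj₂
  have hd₃ : IsTournament d₃ := isTournament_of_inj hinj₃
  have hd₄ : IsTournament d₄ := isTournament_flip x y hxy (isTournament_dual hd₃)
  have hρ₁x : ρ₁ x = 0 := by simp [hρ₁]
  have hρ₁y : ρ₁ y = 1 := by simp [hρ₁, hyx]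
  have hρ₁z : ∀ w, w ≠ x → w ≠ y → ρ₁ w = (e w : ℕ) + 2 := fun w h1 h2 => by simp [hρ₁, h1, h2]
  have hρ₂x : ρ₂ x = n := by simp [hρ₂]
  have hρ₂y : ρ₂ y = n + 1 := by simp [hρ₂, hyx]
  have hρ₂z : ∀ w, w ≠ x → w ≠ y → ρ₂ w = (e w : ℕ) := fun w h1 h2 => by simp [hρ₂, h1, h2]
  have hρ₃x : ρ₃ x = 0 := by simp [hρ₃]
  have hρ₃y : ρ₃ y = n + 1 := by simp [hρ₃, hyx]
  have hρ₃z : ∀ w, w ≠ x → w ≠ y → ρ₃ w = (e w : ℕ) + 1 := fun w h1 h2 => by simp [hρ₃, h1, h2]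
  have h1xy : d₁ x y := by show ρ₁ x < ρ₁ y; rw [hρ₁x, hρ₁y]; omega
  have h1xz : ∀ w, w ≠ x → w ≠ y → d₁ x w := fun w h1 h2 => by
    show ρ₁ x < ρ₁ w; rw [hρ₁x, hρ₁z w h1 h2]; omega
  have h1yz : ∀ w, w ≠ x → w ≠ y → d₁ y w := fun w h1 h2 => by
    show ρ₁ y < ρ₁ w; rw [hρ₁y, hρ₁z w h1 h2]; omega
  have h2xy : d₂ x y := by show ρ₂ x < ρ₂ y; rw [hρ₂x, hρ₂y]; omega
  have h2zx : ∀ w, w ≠ x → w ≠ y → d₂ w x := fun w h1 h2 => by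
    show ρ₂ w < ρ₂ x; rw [hρ₂x, hρ₂z w h1 h2]; exact (e w).isLt
  have h2zy : ∀ w, w ≠ x → w ≠ y → d₂ w y := fun w h1 h2 => by
    show ρ₂ w < ρ₂ y; rw [hρ₂y, hρ₂z w h1 h2]; have := (e w).isLt; omega
  have h3xy : d₃ x y := by show ρ₃ x < ρ₃ y; rw [hρ₃x, hρ₃y]; omega
  have h3xz : ∀ w, w ≠ x → w ≠ y → d₃ x w := fun w h1 h2 => by
    show ρ₃ x < ρ₃ w; rw [hρ₃x, hρ₃z w h1 h2]; omega
  have h3zy : ∀ w, w ≠ x → w ≠ y → d₃ w y := fun w h1 h2 => by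
    show ρ₃ w < ρ₃ y; rw [hρ₃y, hρ₃z w h1 h2]; have := (e w).isLt; omega
  have h4xy : d₄ x y := by
    show if (x = x ∧ y = y) ∨ (x = y ∧ y = x) then x = x else dualT d₃ x y
    rw [if_pos (Or.inl ⟨rfl, rfl⟩)]
  have h4zx : ∀ w, w ≠ x → w ≠ y → d₄ w x := fun w h1 h2 => by
    show if (w = x ∧ x = y) ∨ (w = y ∧ x = x) then w = x else dualT d₃ w x
    rw [if_neg (by rintro (⟨hw, _⟩ | ⟨hw, _⟩) <;> [exact h1 hw; exact h2 hw])]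
    exact h3xz w h1 h2
  have h4yz : ∀ w, w ≠ x → w ≠ y → d₄ y w := fun w h1 h2 => by
    show if (y = x ∧ w = y) ∨ (y = y ∧ w = x) then y = x else dualT d₃ y w
    rw [if_neg (by rintro (⟨hw, _⟩ | ⟨_, hw⟩) <;> [exact hyx hw; exact h1 hw])]
    exact h3zy w h1 h2
  obtain ⟨t₁, ht₁m, ht₁⟩ := majCl_witness (hall d₁ hd₁)
  obtain ⟨t₂, ht₂m, ht₂⟩ := majCl_witness (hall d₂ hd₂)
  obtain ⟨t₃, ht₃m, ht₃⟩ := majCl_witness (hall d₃ hd₃)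
  obtain ⟨t₄, ht₄m, ht₄⟩ := majCl_witness (hall d₄ hd₄)
  have hanti := mem_prCl_antisymm hT
  have hlt' : ∀ t : X → X → ℝ, t ∈ prCl D → ∀ u v : X, u ≠ v → 1 / 2 < t v u → t u v < 1 / 2 := by
    intro t htm u v huv h
    have := hanti t htm u v huv
    linarith
  have hstx : ∀ π ∈ stab (X := X) x y, π.symm x = x := by
    intro π hπ
    conv_lhs => rw [← (mem_stab.1 hπ).1]
    exact π.symm_apply_apply x
  have hsty : ∀ π ∈ stab (X := X) x y, π.symm y = y := by
    intro π hπ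
    conv_lhs => rw [← (mem_stab.1 hπ).2]
    exact π.symm_apply_apply y
  have hstz : ∀ π ∈ stab (X := X) x y, ∀ w : X, w ≠ x → w ≠ y →
      π.symm w ≠ x ∧ π.symm w ≠ y := by
    intro π hπ w hwx hwy
    have h := mem_stab.1 hπ
    constructor
    · intro hc
      apply hwx
      have := congrArg π hc
      rwa [π.apply_symm_apply, h.1] at this
    · intro hc
      apply hwy
      have := congrArg π hc
      rwa [π.apply_symm_apply, h.2] at this
  set A₁ : X → X → ℝ := avgT x y t₁ with hA₁
  set A₂ : X → X → ℝ := avgT x y t₂ with hA₂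
  set A₃ : X → X → ℝ := avgT x y t₃ with hA₃
  set A₄ : X → X → ℝ := avgT x y t₄ with hA₄
  have hA₁m : A₁ ∈ prCl D := avgT_mem hsym x y ht₁m
  have hA₂m : A₂ ∈ prCl D := avgT_mem hsym x y ht₂m
  have hA₃m : A₃ ∈ prCl D := avgT_mem hsym x y ht₃m
  have hA₄m : A₄ ∈ prCl D := avgT_mem hsym x y ht₄m
  have ha₁ : 1 / 2 < A₁ x y := avgT_gt (fun π hπ => by
    rw [hstx π hπ, hsty π hπ]; exact (ht₁ x y hxy).1 h1xy)
  have ha₂ : 1 / 2 < A₂ x y := avgT_gt (fun π hπ => by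
    rw [hstx π hπ, hsty π hπ]; exact (ht₂ x y hxy).1 h2xy)
  have ha₃ : 1 / 2 < A₃ x y := avgT_gt (fun π hπ => by
    rw [hstx π hπ, hsty π hπ]; exact (ht₃ x y hxy).1 h3xy)
  have ha₄ : 1 / 2 < A₄ x y := avgT_gt (fun π hπ => by
    rw [hstx π hπ, hsty π hπ]; exact (ht₄ x y hxy).1 h4xy)
  have hα₁ : 1 / 2 < A₁ x z₀ := avgT_gt (fun π hπ => by
    rw [hstx π hπ]
    obtain ⟨hwx, hwy⟩ := hstz π hπ z₀ hz₀x hz₀y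
    exact (ht₁ x _ (Ne.symm hwx)).1 (h1xz _ hwx hwy))
  have hβ₁ : 1 / 2 < A₁ y z₀ := avgT_gt (fun π hπ => by
    rw [hsty π hπ]
    obtain ⟨hwx, hwy⟩ := hstz π hπ z₀ hz₀x hz₀y
    exact (ht₁ y _ (Ne.symm hwy)).1 (h1yz _ hwx hwy))
  have hα₂ : A₂ x z₀ < 1 / 2 := avgT_lt (fun π hπ => by
    rw [hstx π hπ]
    obtain ⟨hwx, hwy⟩ := hstz π hπ z₀ hz₀x hz₀y
    exact hlt' t₂ ht₂m x _ (Ne.symm hwx) ((ht₂ _ x hwx).1 (h2zx _ hwx hwy)))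
  have hβ₂ : A₂ y z₀ < 1 / 2 := avgT_lt (fun π hπ => by
    rw [hsty π hπ]
    obtain ⟨hwx, hwy⟩ := hstz π hπ z₀ hz₀x hz₀y
    exact hlt' t₂ ht₂m y _ (Ne.symm hwy) ((ht₂ _ y hwy).1 (h2zy _ hwx hwy)))
  have hα₃ : 1 / 2 < A₃ x z₀ := avgT_gt (fun π hπ => by
    rw [hstx π hπ]
    obtain ⟨hwx, hwy⟩ := hstz π hπ z₀ hz₀x hz₀y
    exact (ht₃ x _ (Ne.symm hwx)).1 (h3xz _ hwx hwy))
  have hβ₃ : A₃ y z₀ < 1 / 2 := avgT_lt (fun π hπ => by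
    rw [hsty π hπ]
    obtain ⟨hwx, hwy⟩ := hstz π hπ z₀ hz₀x hz₀y
    exact hlt' t₃ ht₃m y _ (Ne.symm hwy) ((ht₃ _ y hwy).1 (h3zy _ hwx hwy)))
  have hα₄ : A₄ x z₀ < 1 / 2 := avgT_lt (fun π hπ => by
    rw [hstx π hπ]
    obtain ⟨hwx, hwy⟩ := hstz π hπ z₀ hz₀x hz₀y
    exact hlt' t₄ ht₄m x _ (Ne.symm hwx) ((ht₄ _ x hwx).1 (h4zx _ hwx hwy)))
  have hβ₄ : 1 / 2 < A₄ y z₀ := avgT_gt (fun π hπ => by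
    rw [hsty π hπ]
    obtain ⟨hwx, hwy⟩ := hstz π hπ z₀ hz₀x hz₀y
    exact (ht₄ y _ (Ne.symm hwy)).1 (h4yz _ hwx hwy))
  have hinvx : ∀ (t : X → X → ℝ) (v : X), v ≠ x → v ≠ y →
      avgT x y t x v = avgT x y t x z₀ := by
    intro t v hvx hvy
    have hσx : Equiv.swap v z₀ x = x := Equiv.swap_apply_of_ne_of_ne (Ne.symm hvx) (Ne.symm hz₀x)
    have hσy : Equiv.swap v z₀ y = y := Equiv.swap_apply_of_ne_of_ne (Ne.symm hvy) (Ne.symm hz₀y)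
    have h := avgT_inv x y (Equiv.swap v z₀) hσx hσy t x z₀
    rwa [hσx, Equiv.swap_apply_right] at h
  have hinvy : ∀ (t : X → X → ℝ) (v : X), v ≠ x → v ≠ y →
      avgT x y t y v = avgT x y t y z₀ := by
    intro t v hvx hvy
    have hσx : Equiv.swap v z₀ x = x := Equiv.swap_apply_of_ne_of_ne (Ne.symm hvx) (Ne.symm hz₀x)
    have hσy : Equiv.swap v z₀ y = y := Equiv.swap_apply_of_ne_of_ne (Ne.symm hvy) (Ne.symm hz₀y)
    have h := avgT_inv x y (Equiv.swap v z₀) hσx hσy t y z₀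
    rwa [hσy, Equiv.swap_apply_right] at h
  have hinvsw : ∀ (t : X → X → ℝ) (u v : X), u ≠ x → u ≠ y → v ≠ x → v ≠ y →
      avgT x y t u v = avgT x y t v u := by
    intro t u v hux huy hvx hvy
    rcases eq_or_ne u v with rfl | huv
    · rfl
    have hσx : Equiv.swap u v x = x := Equiv.swap_apply_of_ne_of_ne (Ne.symm hux) (Ne.symm hvx)
    have hσy : Equiv.swap u v y = y := Equiv.swap_apply_of_ne_of_ne (Ne.symm huy) (Ne.symm hvy)
    have h := avgT_inv x y (Equiv.swap u v) hσx hσy t v u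
    rwa [Equiv.swap_apply_right, Equiv.swap_apply_left] at h
  have hinvx₁ : ∀ v, v ≠ x → v ≠ y → A₁ x v = A₁ x z₀ := fun v h1 h2 => hinvx t₁ v h1 h2
  have hinvx₂ : ∀ v, v ≠ x → v ≠ y → A₂ x v = A₂ x z₀ := fun v h1 h2 => hinvx t₂ v h1 h2
  have hinvx₃ : ∀ v, v ≠ x → v ≠ y → A₃ x v = A₃ x z₀ := fun v h1 h2 => hinvx t₃ v h1 h2
  have hinvx₄ : ∀ v, v ≠ x → v ≠ y → A₄ x v = A₄ x z₀ := fun v h1 h2 => hinvx t₄ v h1 h2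
  have hinvy₁ : ∀ v, v ≠ x → v ≠ y → A₁ y v = A₁ y z₀ := fun v h1 h2 => hinvy t₁ v h1 h2
  have hinvy₂ : ∀ v, v ≠ x → v ≠ y → A₂ y v = A₂ y z₀ := fun v h1 h2 => hinvy t₂ v h1 h2
  have hinvy₃ : ∀ v, v ≠ x → v ≠ y → A₃ y v = A₃ y z₀ := fun v h1 h2 => hinvy t₃ v h1 h2
  have hinvy₄ : ∀ v, v ≠ x → v ≠ y → A₄ y v = A₄ y z₀ := fun v h1 h2 => hinvy t₄ v h1 h2
  set P : ℝ := (1 / 2 - A₃ y z₀) * (A₁ x z₀ - 1 / 2) + (A₁ y z₀ - 1 / 2) * (A₃ x z₀ - 1 / 2)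
    with hPdef
  set Q : ℝ := (1 / 2 - A₂ y z₀) * (1 / 2 - A₄ x z₀) + (A₄ y z₀ - 1 / 2) * (1 / 2 - A₂ x z₀)
    with hQdef
  have hP : 0 < P := by
    rw [hPdef]
    have := mul_pos (by linarith : (0:ℝ) < 1 / 2 - A₃ y z₀) (by linarith : (0:ℝ) < A₁ x z₀ - 1 / 2)
    have := mul_pos (by linarith : (0:ℝ) < A₁ y z₀ - 1 / 2) (by linarith : (0:ℝ) < A₃ x z₀ - 1 / 2)
    linarith
  have hQ : 0 < Q := by
    rw [hQdef]
    have := mul_pos (by linarith : (0:ℝ) < 1 / 2 - A₂ y z₀) (by linarith : (0:ℝ) < 1 / 2 - A₄ x z₀)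
    have := mul_pos (by linarith : (0:ℝ) < A₄ y z₀ - 1 / 2) (by linarith : (0:ℝ) < 1 / 2 - A₂ x z₀)
    linarith
  set μ₁ : ℝ := (1 / 2 - A₃ y z₀) * Q with hμ₁def
  set μ₂ : ℝ := (A₄ y z₀ - 1 / 2) * P with hμ₂def
  set μ₃ : ℝ := (A₁ y z₀ - 1 / 2) * Q with hμ₃def
  set μ₄ : ℝ := (1 / 2 - A₂ y z₀) * P with hμ₄def
  have hμ1 : 0 < μ₁ := mul_pos (by linarith) hQ
  have hμ2 : 0 < μ₂ := mul_pos (by linarith) hP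
  have hμ3 : 0 < μ₃ := mul_pos (by linarith) hQ
  have hμ4 : 0 < μ₄ := mul_pos (by linarith) hP
  set M : ℝ := μ₁ + μ₂ + μ₃ + μ₄ with hMdef
  have hM : 0 < M := by rw [hMdef]; linarith
  have hsumα : μ₁ * (A₁ x z₀ - 1 / 2) + μ₂ * (A₂ x z₀ - 1 / 2) + μ₃ * (A₃ x z₀ - 1 / 2) +
      μ₄ * (A₄ x z₀ - 1 / 2) = 0 := by
    rw [hμ₁def, hμ₂def, hμ₃def, hμ₄def, hPdef, hQdef]; ring
  have hsumβ : μ₁ * (A₁ y z₀ - 1 / 2) + μ₂ * (A₂ y z₀ - 1 / 2) + μ₃ * (A₃ y z₀ - 1 / 2) +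
      μ₄ * (A₄ y z₀ - 1 / 2) = 0 := by
    rw [hμ₁def, hμ₂def, hμ₃def, hμ₄def]; ring
  set tt : X → X → ℝ :=
    fun u v => (μ₁ * A₁ u v + μ₂ * A₂ u v + μ₃ * A₃ u v + μ₄ * A₄ u v) / M with httdef
  have httm : tt ∈ prCl D := by
    rw [httdef, hMdef]
    exact comb4_mem (convex_convexHull ℝ _) hA₁m hA₂m hA₃m hA₄m hμ1 hμ2 hμ3 hμ4
  have hvalx : ∀ w, w ≠ x → w ≠ y → tt x w = 1 / 2 := by
    intro w hwx hwy
    show (μ₁ * A₁ x w + μ₂ * A₂ x w + μ₃ * A₃ x w + μ₄ * A₄ x w) / M = 1 / 2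
    rw [hinvx₁ w hwx hwy, hinvx₂ w hwx hwy, hinvx₃ w hwx hwy, hinvx₄ w hwx hwy,
      div_eq_iff (ne_of_gt hM), hMdef]
    linarith [hsumα]
  have hvaly : ∀ w, w ≠ x → w ≠ y → tt y w = 1 / 2 := by
    intro w hwx hwy
    show (μ₁ * A₁ y w + μ₂ * A₂ y w + μ₃ * A₃ y w + μ₄ * A₄ y w) / M = 1 / 2
    rw [hinvy₁ w hwx hwy, hinvy₂ w hwx hwy, hinvy₃ w hwx hwy, hinvy₄ w hwx hwy,
      div_eq_iff (ne_of_gt hM), hMdef]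
    linarith [hsumβ]
  have hvalzz : ∀ u v : X, u ≠ x → u ≠ y → v ≠ x → v ≠ y → u ≠ v → tt u v = 1 / 2 := by
    intro u v hux huy hvx hvy huv
    have e₁ : A₁ u v = 1 / 2 := by
      have h1 : A₁ u v = A₁ v u := hinvsw t₁ u v hux huy hvx hvy
      have h2 := hanti A₁ hA₁m u v huv
      linarith
    have e₂ : A₂ u v = 1 / 2 := by
      have h1 : A₂ u v = A₂ v u := hinvsw t₂ u v hux huy hvx hvy
      have h2 := hanti A₂ hA₂m u v huv
      linarith
    have e₃ : A₃ u v = 1 / 2 := by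
      have h1 : A₃ u v = A₃ v u := hinvsw t₃ u v hux huy hvx hvy
      have h2 := hanti A₃ hA₃m u v huv
      linarith
    have e₄ : A₄ u v = 1 / 2 := by
      have h1 : A₄ u v = A₄ v u := hinvsw t₄ u v hux huy hvx hvy
      have h2 := hanti A₄ hA₄m u v huv
      linarith
    show (μ₁ * A₁ u v + μ₂ * A₂ u v + μ₃ * A₃ u v + μ₄ * A₄ u v) / M = 1 / 2
    rw [e₁, e₂, e₃, e₄, div_eq_iff (ne_of_gt hM), hMdef]
    ring
  refine ⟨tt, httm, ?_, ?_⟩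
  · show 1 / 2 < (μ₁ * A₁ x y + μ₂ * A₂ x y + μ₃ * A₃ x y + μ₄ * A₄ x y) / M
    rw [lt_div_iff₀ hM]
    have k₁ := mul_lt_mul_of_pos_left ha₁ hμ1
    have k₂ := mul_lt_mul_of_pos_left ha₂ hμ2
    have k₃ := mul_lt_mul_of_pos_left ha₃ hμ3
    have k₄ := mul_lt_mul_of_pos_left ha₄ hμ4
    rw [hMdef]
    linarith
  · intro u v huv hnepair
    by_cases hux : u = x
    · subst hux
      have hvy : v ≠ y := by rintro rfl; exact hnepair rfl
      exact hvalx v (Ne.symm huv) hvy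
    · by_cases huy : u = y
      · subst huy
        have hvx : v ≠ x := by
          intro hh
          apply hnepair
          rw [hh]
          exact Set.pair_comm u x
        exact hvaly v hvx (Ne.symm huv)
      · by_cases hvx : v = x
        · subst hvx
          have h1 := hanti tt httm u v huv
          rw [hvalx u hux huy] at h1
          linarith
        · by_cases hvy : v = y
          · subst hvy
            have h1 := hanti tt httm u v huv
            rw [hvaly u hux huy] at h1
            linarith
          · exact hvalzz u v hux huy hvx hvy huv
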